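/- Let λ > π²/|Ω|² and set k_λ = ⌊|Ω|√λ/π⌋. Then ∑_{k=1}^{k_λ} (λ − π²k²/|Ω|²) ≤ (2|Ω|/(3π)) λ^{3/2} − (k_λ/(|Ω|√λ/π))² · λ/2, and since k_λ ≥ (|Ω|√λ/π)/2, also ∑_{k=1}^{k_λ}(λ − π²k²/|Ω|²) ≤ (2|Ω|/(3π))λ^{3/2} − λ/8. -/

import Mathlib

open Real

lemma sum_sq_Icc (m : ℕ) :
    ∑ k ∈ Finset.Icc 1 m, (k : ℝ) ^ 2 = m * (m + 1) * (2 * m + 1) / 6 := by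
  induction m with
  | zero => simp
  | succ n ih =>
    rw [Finset.sum_Icc_succ_top (by omega : 1 ≤ n+1), ih]
    push_cast
    ring

lemma key_ineq (t M : ℝ) (hM : 1 ≤ M) (hMt : M ≤ t) :
    M * t ^ 2 - M * (M + 1) * (2 * M + 1) / 6 ≤ 2 / 3 * t ^ 3 - M ^ 2 / 2 := by
  nlinarith [sq_nonneg (t - M), mul_nonneg (mul_nonneg (sq_nonneg (t - M)) (by linarith : (0:ℝ) ≤ 2 * t + M)) (by norm_num : (0:ℝ) ≤ 1)]

/-- For `L > 0` and `Λ > π²/L²`, with `kΛ = ⌊L√Λ/π⌋`: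
`∑_{k=1}^{kΛ} (Λ - π²k²/L²) ≤ (2L/(3π))Λ^{3/2} - (kΛ/(L√Λ/π))²·Λ/2`, and also
`∑_{k=1}^{kΛ} (Λ - π²k²/L²) ≤ (2L/(3π))Λ^{3/2} - Λ/8`. -/
theorem riesz_sum_floor_bounds (L Λ : ℝ) (hL : 0 < L) (hΛ : π ^ 2 / L ^ 2 < Λ) :
    (∑ k ∈ Finset.Icc 1 ⌊L * Real.sqrt Λ / π⌋₊, (Λ - π ^ 2 * (k : ℝ) ^ 2 / L ^ 2) ≤
        2 * L / (3 * π) * Λ ^ ((3 : ℝ) / 2) -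
          ((⌊L * Real.sqrt Λ / π⌋₊ : ℝ) / (L * Real.sqrt Λ / π)) ^ 2 * Λ / 2) ∧
      ∑ k ∈ Finset.Icc 1 ⌊L * Real.sqrt Λ / π⌋₊, (Λ - π ^ 2 * (k : ℝ) ^ 2 / L ^ 2) ≤
        2 * L / (3 * π) * Λ ^ ((3 : ℝ) / 2) - Λ / 8 := by
  have hπ : (0:ℝ) < π := pi_pos
  have hΛ0 : 0 < Λ := lt_trans (by positivity) hΛ
  set t : ℝ := L * Real.sqrt Λ / π with ht_def
  have hs : Real.sqrt Λ = π * t / L := by rw [ht_def]; field_simp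
  have ht1 : 1 < t := by
    have h1 : π / L < Real.sqrt Λ := by
      have := Real.sqrt_lt_sqrt (by positivity) hΛ
      rwa [show π ^ 2 / L ^ 2 = (π / L) ^ 2 by ring, Real.sqrt_sq (by positivity)] at this
    rw [ht_def, lt_div_iff₀ hπ, one_mul, mul_comm]
    exact (div_lt_iff₀ hL).mp h1
  have ht0 : 0 < t := by linarith
  set m : ℕ := ⌊t⌋₊ with hm_def
  have hm1 : 1 ≤ m := Nat.one_le_floor_iff t |>.mpr (le_of_lt ht1)
  have hmle : (m : ℝ) ≤ t := Nat.floor_le ht0.le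
  have hmlt : t < m + 1 := Nat.lt_floor_add_one t
  have hm1R : (1:ℝ) ≤ m := by exact_mod_cast hm1
  -- Λ in terms of t
  have hΛeq : Λ = π ^ 2 * t ^ 2 / L ^ 2 := by
    have := Real.sq_sqrt hΛ0.le
    rw [hs] at this
    field_simp at this ⊢
    linarith [this]
  have h32 : Λ ^ ((3:ℝ)/2) = π ^ 3 * t ^ 3 / L ^ 3 := by
    have : Λ ^ ((3:ℝ)/2) = (Real.sqrt Λ) ^ 3 := by
      rw [show ((3:ℝ)/2) = (1/2) * (3:ℕ) by push_cast; ring, Real.rpow_mul hΛ0.le,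
        Real.rpow_natCast, ← Real.sqrt_eq_rpow]
    rw [this, hs]
    field_simp
  -- sum evaluation
  have hsum : ∑ k ∈ Finset.Icc 1 m, (Λ - π ^ 2 * (k : ℝ) ^ 2 / L ^ 2)
      = m * Λ - π ^ 2 / L ^ 2 * (m * (m + 1) * (2 * m + 1) / 6) := by
    rw [Finset.sum_sub_distrib, Finset.sum_const, Nat.card_Icc, nsmul_eq_mul]
    simp only [Nat.add_sub_cancel]
    rw [show ∑ k ∈ Finset.Icc 1 m, π ^ 2 * (k:ℝ) ^ 2 / L ^ 2
        = π ^ 2 / L ^ 2 * ∑ k ∈ Finset.Icc 1 m, (k:ℝ) ^ 2 by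
      rw [Finset.mul_sum]; apply Finset.sum_congr rfl; intro k _; ring]
    rw [sum_sq_Icc]
  have key := key_ineq t m hm1R hmle
  have first : ∑ k ∈ Finset.Icc 1 m, (Λ - π ^ 2 * (k : ℝ) ^ 2 / L ^ 2) ≤
      2 * L / (3 * π) * Λ ^ ((3 : ℝ) / 2) - ((m : ℝ) / t) ^ 2 * Λ / 2 := by
    rw [hsum, h32]
    rw [hΛeq]
    have hrw : 2 * L / (3 * π) * (π ^ 3 * t ^ 3 / L ^ 3) -
        ((m : ℝ) / t) ^ 2 * (π ^ 2 * t ^ 2 / L ^ 2) / 2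
        = π ^ 2 / L ^ 2 * (2 / 3 * t ^ 3 - (m:ℝ) ^ 2 / 2) := by
      field_simp
    rw [hrw]
    have hlhs : (m:ℝ) * (π ^ 2 * t ^ 2 / L ^ 2) - π ^ 2 / L ^ 2 * ((m:ℝ) * (m + 1) * (2 * m + 1) / 6)
        = π ^ 2 / L ^ 2 * ((m:ℝ) * t ^ 2 - (m:ℝ) * (m + 1) * (2 * m + 1) / 6) := by ring
    rw [hlhs]
    apply mul_le_mul_of_nonneg_left key (by positivity)
  refine ⟨first, first.trans ?_⟩
  have hmt : t ≤ 2 * m := by linarith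
  have hhalf : (1:ℝ)/2 ≤ (m:ℝ) / t := by
    rw [le_div_iff₀ ht0]
    linarith
  have : Λ / 8 ≤ ((m : ℝ) / t) ^ 2 * Λ / 2 := by
    nlinarith [hΛ0.le, sq_nonneg ((m:ℝ)/t - 1/2)]
  linarith
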